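/- Let S be a countably based Cu-semigroup satisfying O5, O6 and O7. For every x ∈ S and idempotents w₁, w₂ ∈ S, one has x ∧ w₁ + x ∧ w₂ = x ∧ (w₁ ∧ w₂) + x ∧ (w₁ + w₂). -/
import Mathlib


open scoped ENNReal

namespace CuFormal

variable {S : Type*} [AddCommMonoid S] [PartialOrder S]

/-- The algebra-free way-below relation: `x ≪ y` iff whenever `y ≤ sup yₙ` for an
increasing sequence with supremum, then `x ≤ yₙ` for some `n`. -/
def WayBelow (x y : S) : Prop :=
  ∀ f : ℕ → S, Monotone f → ∀ s : S, IsLUB (Set.range f) s → y ≤ s → ∃ n, x ≤ f n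

/-- Positively ordered monoid with addition monotone. -/
def PosOrdered : Prop :=
  (∀ x : S, (0 : S) ≤ x) ∧ ∀ a b c : S, b ≤ c → a + b ≤ a + c

/-- O1: every increasing sequence has a supremum. -/
def AxO1 : Prop := ∀ f : ℕ → S, Monotone f → ∃ s : S, IsLUB (Set.range f) s

/-- O2: every element is the supremum of a ≪-increasing sequence. -/
def AxO2 : Prop := ∀ x : S, ∃ f : ℕ → S, Monotone f ∧
  (∀ n, WayBelow (f n) (f (n + 1))) ∧ IsLUB (Set.range f) x

/-- O3 -/
def AxO3 : Prop := ∀ x₁ y₁ x₂ y₂ : S,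
  WayBelow x₁ y₁ → WayBelow x₂ y₂ → WayBelow (x₁ + x₂) (y₁ + y₂)

/-- O4 -/
def AxO4 : Prop := ∀ f g : ℕ → S, Monotone f → Monotone g →
  ∀ a b : S, IsLUB (Set.range f) a → IsLUB (Set.range g) b →
    IsLUB (Set.range fun n => f n + g n) (a + b)

/-- A Cu-semigroup: positively ordered monoid satisfying O1–O4. -/
def CuSemigroup : Prop :=
  PosOrdered (S := S) ∧ AxO1 (S := S) ∧ AxO2 (S := S) ∧ AxO3 (S := S) ∧ AxO4 (S := S)

/-- O5 -/
def AxO5 : Prop := ∀ x' x y w' w : S, WayBelow x' x → x ≤ y → WayBelow w' w →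
  x + w ≤ y → ∃ z : S, x' + z ≤ y ∧ y ≤ x + z ∧ WayBelow w' z

/-- O6 -/
def AxO6 : Prop := ∀ x' x y z : S, WayBelow x' x → x ≤ y + z →
  ∃ y' z' : S, x' ≤ y' + z' ∧ y' ≤ x ∧ y' ≤ y ∧ z' ≤ x ∧ z' ≤ z

/-- O7 -/
def AxO7 : Prop := ∀ x₁' x₁ x₂' x₂ w : S,
  WayBelow x₁' x₁ → x₁ ≤ w → WayBelow x₂' x₂ → x₂ ≤ w →
  ∃ x : S, WayBelow x₁' x ∧ WayBelow x₂' x ∧ x ≤ w ∧ x ≤ x₁ + x₂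

/-- An ideal: a downward hereditary subsemigroup closed under suprema of increasing
sequences. -/
def IsIdeal (J : Set S) : Prop :=
  (0 : S) ∈ J ∧ (∀ x y : S, x ∈ J → y ∈ J → x + y ∈ J) ∧
  (∀ x y : S, y ∈ J → x ≤ y → x ∈ J) ∧
  (∀ f : ℕ → S, Monotone f → (∀ n, f n ∈ J) →
    ∀ s : S, IsLUB (Set.range f) s → s ∈ J)

/-- Countably based. -/
def CountablyBased : Prop := ∃ B : Set S, B.Countable ∧
  ∀ x : S, ∃ f : ℕ → S, (∀ n, f n ∈ B) ∧ Monotone f ∧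
    (∀ n, WayBelow (f n) (f (n + 1))) ∧ IsLUB (Set.range f) x

/-- A functional on `S`: preserves `0`, addition, order and suprema of increasing
sequences. -/
def IsFunctional (l : S → ℝ≥0∞) : Prop :=
  l 0 = 0 ∧ (∀ x y : S, l (x + y) = l x + l y) ∧ Monotone l ∧
  (∀ f : ℕ → S, Monotone f → ∀ s : S, IsLUB (Set.range f) s → l s = ⨆ n, l (f n))

/-- `(x̂ ∧ ŷ)(λ) = inf { λ₁(x) + λ₂(y) : λ = λ₁ + λ₂ }`. -/
noncomputable def hatInf (x y : S) (l : S → ℝ≥0∞) : ℝ≥0∞ :=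
  sInf {t : ℝ≥0∞ | ∃ l₁ l₂ : S → ℝ≥0∞, IsFunctional l₁ ∧ IsFunctional l₂ ∧
    (∀ u : S, l u = l₁ u + l₂ u) ∧ t = l₁ x + l₂ y}

/-- Edwards' condition for the functional `l`. -/
def EdwardsFor (l : S → ℝ≥0∞) : Prop := ∀ x y : S,
  hatInf x y l = sSup {t : ℝ≥0∞ | ∃ z : S, z ≤ x ∧ z ≤ y ∧ t = l z}

/-- The ideal generated by a subset. -/
def idealGen (X : Set S) : Set S := ⋂₀ {J : Set S | IsIdeal J ∧ X ⊆ J}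


section Aux

variable {S : Type*} [AddCommMonoid S] [PartialOrder S]

private lemma glb_left {a b c : S} (h : IsGLB {a, b} c) : c ≤ a :=
  h.1 (Set.mem_insert _ _)

private lemma glb_right {a b c : S} (h : IsGLB {a, b} c) : c ≤ b :=
  h.1 (Set.mem_insert_of_mem _ rfl)

private lemma le_glb {a b c z : S} (h : IsGLB {a, b} c) (h1 : z ≤ a) (h2 : z ≤ b) :
    z ≤ c :=
  h.2 (by rintro y (rfl | rfl) <;> assumption)

private lemma add_le_add' (hP : PosOrdered (S := S)) {a b c d : S}
    (h1 : a ≤ b) (h2 : c ≤ d) : a + c ≤ b + d := by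
  calc a + c ≤ a + d := hP.2 _ _ _ h2
    _ = d + a := add_comm _ _
    _ ≤ d + b := hP.2 _ _ _ h1
    _ = b + d := add_comm _ _

private lemma wb_zero (hP : PosOrdered (S := S)) : WayBelow (0 : S) 0 :=
  fun f _ _ _ _ => ⟨0, hP.1 _⟩

private lemma le_trans_wb {u v w w' : S} (h1 : u ≤ v) (h2 : WayBelow v w) (h3 : w ≤ w') :
    WayBelow u w' := fun f hf s hs hws =>
  let ⟨n, hn⟩ := h2 f hf s hs (h3.trans hws)
  ⟨n, h1.trans hn⟩

private lemma wb_le (hO2 : AxO2 (S := S)) {u v : S} (h : WayBelow u v) : u ≤ v := by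
  obtain ⟨f, hf, _, hlub⟩ := hO2 v
  obtain ⟨n, hn⟩ := h f hf v hlub le_rfl
  exact hn.trans (hlub.1 ⟨n, rfl⟩)

private lemma le_of_forall_wb (hO2 : AxO2 (S := S)) {a e : S}
    (h : ∀ u, WayBelow u a → u ≤ e) : a ≤ e := by
  obtain ⟨f, hf, hwb, hlub⟩ := hO2 a
  refine hlub.2 ?_
  rintro _ ⟨n, rfl⟩
  exact h _ (le_trans_wb le_rfl (hwb n) (hlub.1 ⟨n + 1, rfl⟩))

private lemma add_le_of_forall_wb (hP : PosOrdered (S := S)) (hO2 : AxO2 (S := S))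
    (hO4 : AxO4 (S := S)) {a d e : S}
    (h : ∀ u, WayBelow u a → u + d ≤ e) : a + d ≤ e := by
  obtain ⟨f, hf, hwb, hlub⟩ := hO2 a
  have hconst : IsLUB (Set.range (fun _ : ℕ => d)) d :=
    ⟨by rintro _ ⟨n, rfl⟩; exact le_rfl, fun y hy => hy ⟨0, rfl⟩⟩
  refine (hO4 f (fun _ => d) hf monotone_const a d hlub hconst).2 ?_
  rintro _ ⟨n, rfl⟩
  exact h _ (le_trans_wb le_rfl (hwb n) (hlub.1 ⟨n + 1, rfl⟩))

private lemma add_le_of_forall_wb' (hP : PosOrdered (S := S)) (hO2 : AxO2 (S := S))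
    (hO4 : AxO4 (S := S)) {a d e : S}
    (h : ∀ u, WayBelow u a → d + u ≤ e) : d + a ≤ e := by
  rw [add_comm]
  exact add_le_of_forall_wb hP hO2 hO4 (fun u hu => by rw [add_comm]; exact h u hu)

end Aux

/-- `x ∧ w₁ + x ∧ w₂ = x ∧ (w₁ ∧ w₂) + x ∧ (w₁ + w₂)` for idempotents
`w₁, w₂`. -/
theorem stmt11 {S : Type*} [AddCommMonoid S] [PartialOrder S]
    (hCu : CuSemigroup (S := S)) (hcb : CountablyBased (S := S))
    (hO5 : AxO5 (S := S)) (hO6 : AxO6 (S := S)) (hO7 : AxO7 (S := S))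
    (x w₁ w₂ : S) (hw₁ : w₁ + w₁ = w₁) (hw₂ : w₂ + w₂ = w₂)
    (w₁₂ : S) (hw₁₂ : IsGLB {w₁, w₂} w₁₂)
    (a₁ : S) (ha₁ : IsGLB {x, w₁} a₁)
    (a₂ : S) (ha₂ : IsGLB {x, w₂} a₂)
    (b₁ : S) (hb₁ : IsGLB {x, w₁₂} b₁)
    (b₂ : S) (hb₂ : IsGLB {x, w₁ + w₂} b₂) :
    a₁ + a₂ = b₁ + b₂ := by
  obtain ⟨hP, hO1, hO2, hO3, hO4⟩ := hCu
  -- basic inequalities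
  have hle_add_r : ∀ u v : S, u ≤ u + v := by
    intro u v
    have h := hP.2 u 0 v (hP.1 v)
    rwa [add_zero] at h
  have hle_add_l : ∀ u v : S, v ≤ u + v := fun u v => (hle_add_r v u).trans_eq (add_comm _ _)
  have ha1x : a₁ ≤ x := glb_left ha₁
  have ha1w : a₁ ≤ w₁ := glb_right ha₁
  have ha2x : a₂ ≤ x := glb_left ha₂
  have ha2w : a₂ ≤ w₂ := glb_right ha₂
  have hb1x : b₁ ≤ x := glb_left hb₁
  have hb1w : b₁ ≤ w₁₂ := glb_right hb₁
  have hb2x : b₂ ≤ x := glb_left hb₂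
  have hb2w : b₂ ≤ w₁ + w₂ := glb_right hb₂
  have hw121 : w₁₂ ≤ w₁ := glb_left hw₁₂
  have hw122 : w₁₂ ≤ w₂ := glb_right hw₁₂
  have hb1a1 : b₁ ≤ a₁ := le_glb ha₁ hb1x (hb1w.trans hw121)
  have hb1a2 : b₁ ≤ a₂ := le_glb ha₂ hb1x (hb1w.trans hw122)
  -- direction ≤ : a₁ + a₂ ≤ b₁ + b₂
  have hdir1 : a₁ + a₂ ≤ b₁ + b₂ := by
    refine add_le_of_forall_wb hP hO2 hO4 ?_
    intro a₁' h₁'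
    have ha1'a1 : a₁' ≤ a₁ := wb_le hO2 h₁'
    obtain ⟨c, hc1, hc2, -⟩ :=
      hO5 a₁' a₁ x 0 0 h₁' ha1x (wb_zero hP) (by rw [add_zero]; exact ha1x)
    refine add_le_of_forall_wb' hP hO2 hO4 ?_
    intro a₂' h₂'
    obtain ⟨p, q, hpq, hpa2, hpa1, hqa2, hqc⟩ :=
      hO6 a₂' a₂ a₁ c h₂' (ha2x.trans hc2)
    have hpb1 : p ≤ b₁ :=
      le_glb hb₁ (hpa1.trans ha1x)
        (le_glb hw₁₂ (hpa1.trans ha1w) (hpa2.trans ha2w))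
    have hsum : a₁' + q ≤ b₂ := by
      refine le_glb hb₂ ?_ ?_
      · exact (add_le_add' hP le_rfl hqc).trans hc1
      · exact add_le_add' hP (ha1'a1.trans ha1w) (hqa2.trans ha2w)
    calc a₁' + a₂' ≤ a₁' + (p + q) := hP.2 _ _ _ hpq
      _ = p + (a₁' + q) := add_left_comm _ _ _
      _ ≤ b₁ + b₂ := add_le_add' hP hpb1 hsum
  -- direction ≥ : b₁ + b₂ ≤ a₁ + a₂
  have hb2le : b₂ ≤ a₁ + a₂ := by
    refine le_of_forall_wb hO2 ?_
    intro t ht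
    obtain ⟨y₁, y₂, hty, hy1b2, hy1w1, hy2b2, hy2w2⟩ := hO6 t b₂ w₁ w₂ ht hb2w
    have hy1a1 : y₁ ≤ a₁ := le_glb ha₁ (hy1b2.trans hb2x) hy1w1
    have hy2a2 : y₂ ≤ a₂ := le_glb ha₂ (hy2b2.trans hb2x) hy2w2
    exact hty.trans (add_le_add' hP hy1a1 hy2a2)
  have hdir2 : b₁ + b₂ ≤ a₁ + a₂ := by
    refine add_le_of_forall_wb hP hO2 hO4 ?_
    intro b₁' hb₁'
    obtain ⟨c, hc1, hc2, -⟩ :=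
      hO5 b₁' b₁ a₁ 0 0 hb₁' hb1a1 (wb_zero hP) (by rw [add_zero]; exact hb1a1)
    have hkey : b₂ ≤ c + a₂ := by
      refine le_of_forall_wb hO2 ?_
      intro t ht
      have hb2' : b₂ ≤ c + (b₁ + a₂) := by
        refine hb2le.trans ?_
        calc a₁ + a₂ ≤ (b₁ + c) + a₂ := add_le_add' hP hc2 le_rfl
          _ = c + (b₁ + a₂) := by rw [add_comm b₁ c, add_assoc]
      obtain ⟨y', z', hts, -, hy'c, hz'b2, hz'sum⟩ := hO6 t b₂ c (b₁ + a₂) ht hb2'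
      have hz'w2 : z' ≤ w₂ := by
        refine hz'sum.trans ?_
        calc b₁ + a₂ ≤ w₂ + w₂ := add_le_add' hP (hb1w.trans hw122) ha2w
          _ = w₂ := hw₂
      have hz'a2 : z' ≤ a₂ := le_glb ha₂ (hz'b2.trans hb2x) hz'w2
      exact hts.trans (add_le_add' hP hy'c hz'a2)
    calc b₁' + b₂ ≤ b₁' + (c + a₂) := hP.2 _ _ _ hkey
      _ = (b₁' + c) + a₂ := (add_assoc _ _ _).symm
      _ ≤ a₁ + a₂ := add_le_add' hP hc1 le_rfl
  exact le_antisymm hdir1 hdir2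


end CuFormal
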